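/- For every z ∈ ℂ with z ≠ 0 and every v = (v₁, v₂) ∈ ℂ², one has |v·g(z)|² − |conj(v)·g(conj z)|² = −(4√(a²+1)/κ) · Im(v₁ · conj(v₂) / z), where v·g(z) = v₁g(z)₁ + v₂g(z)₂ and conj(v) = (conj v₁, conj v₂). -/

import Mathlib

open Complex

/-- The column-vector-valued function
`g(z) = √(a−i) · (i/(κz), 1)ᵀ` (principal branch of the square root). -/
noncomputable def gvec (a κ : ℝ) (z : ℂ) : Fin 2 → ℂ :=
  (((a : ℂ) - I) ^ ((1 : ℂ) / 2)) • ![I / ((κ : ℂ) * z), 1]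

/-- With `a = √(α₁/β_ℓ)` and `κ = √(α₁ β_ℓ)`, for every `z ≠ 0` and `v ∈ ℂ²`:
`|v·g(z)|² − |v̄·g(z̄)|² = −(4√(a²+1)/κ)·Im(v₁ v̄₂ / z)`. -/
theorem stmt10 (α₁ βℓ : ℝ) (hα : 0 < α₁) (hβ : 0 < βℓ)
    (a κ : ℝ) (ha : a = Real.sqrt (α₁ / βℓ)) (hκ : κ = Real.sqrt (α₁ * βℓ))
    (z : ℂ) (hz : z ≠ 0) (v : Fin 2 → ℂ) :
    ‖v 0 * gvec a κ z 0 + v 1 * gvec a κ z 1‖ ^ 2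
      - ‖(starRingEnd ℂ) (v 0) * gvec a κ ((starRingEnd ℂ) z) 0
          + (starRingEnd ℂ) (v 1) * gvec a κ ((starRingEnd ℂ) z) 1‖ ^ 2
    = -(4 * Real.sqrt (a ^ 2 + 1) / κ)
        * ((v 0 * (starRingEnd ℂ) (v 1)) / z).im := by
  have hκ0 : κ ≠ 0 := by
    rw [hκ]; exact ne_of_gt (Real.sqrt_pos.mpr (mul_pos hα hβ))
  have hbase : ((a : ℂ) - I) ≠ 0 := by
    intro h
    have := congrArg Complex.im h
    simp at this
  set s : ℂ := ((a : ℂ) - I) ^ ((1 : ℂ) / 2) with hsdef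
  have hK : ‖s‖ ^ 2 = Real.sqrt (a ^ 2 + 1) := by
    have hc : ((1:ℂ)/2) = (((1/2 : ℝ)) : ℂ) := by norm_num
    rw [hsdef, hc, Complex.norm_cpow_real]
    have : ‖(a : ℂ) - I‖ = Real.sqrt (a ^ 2 + 1) := by
      rw [Complex.norm_def, Complex.normSq_apply]
      simp
      ring_nf
    rw [this]
    rw [← Real.rpow_natCast _ 2, ← Real.rpow_mul (Real.sqrt_nonneg _)]
    norm_num
  have key : ∀ w : ℂ, ‖s * w‖ ^ 2 = Real.sqrt (a ^ 2 + 1) * Complex.normSq w := by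
    intro w
    rw [norm_mul, mul_pow, hK, Complex.sq_norm]
  have h0 : v 0 * gvec a κ z 0 + v 1 * gvec a κ z 1
      = s * (v 0 * (I / ((κ : ℂ) * z)) + v 1) := by
    simp [gvec]; rw [hsdef]; ring
  have h1 : (starRingEnd ℂ) (v 0) * gvec a κ ((starRingEnd ℂ) z) 0
      + (starRingEnd ℂ) (v 1) * gvec a κ ((starRingEnd ℂ) z) 1
      = s * ((starRingEnd ℂ) (v 0) * (I / ((κ : ℂ) * (starRingEnd ℂ) z)) + (starRingEnd ℂ) (v 1)) := by
    simp [gvec]; rw [hsdef]; ring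
  rw [h0, h1, key, key]
  rw [← mul_sub]
  have main : Complex.normSq (v 0 * (I / ((κ : ℂ) * z)) + v 1)
      - Complex.normSq ((starRingEnd ℂ) (v 0) * (I / ((κ : ℂ) * (starRingEnd ℂ) z)) + (starRingEnd ℂ) (v 1))
      = -(4 / κ) * ((v 0 * (starRingEnd ℂ) (v 1)) / z).im := by
    have hzsq : z.re ^ 2 + z.im ^ 2 ≠ 0 := by
      have := Complex.normSq_pos.mpr hz
      rw [Complex.normSq_apply] at this
      nlinarith
    have hzsq' : z.im ^ 2 + z.re ^ 2 ≠ 0 := by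
      intro h; apply hzsq; linarith
    have h3 : κ ^ 2 * z.im ^ 2 + κ ^ 2 * z.re ^ 2 ≠ 0 := by
      have : κ ^ 2 * z.im ^ 2 + κ ^ 2 * z.re ^ 2 = κ ^ 2 * (z.im ^ 2 + z.re ^ 2) := by ring
      rw [this]
      exact mul_ne_zero (pow_ne_zero _ hκ0) hzsq'
    simp [Complex.normSq_apply, Complex.div_re, Complex.div_im, Complex.normSq_apply]
    rw [show κ * z.re * (κ * z.re) + κ * z.im * (κ * z.im) = κ ^ 2 * (z.im ^ 2 + z.re ^ 2)
      from by ring, show z.re * z.re + z.im * z.im = z.im ^ 2 + z.re ^ 2 from by ring]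
    field_simp
    ring
  rw [main]
  ring
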